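/- Let V be a 3-dimensional real vector space with a nondegenerate symmetric bilinear form ⟨·,·⟩, and let C be a nonzero Cotton-like tensor on V whose kernel D = {u : C(u,·,·)=0} has dimension 1. Then there exist a nonzero vector u ∈ D and a vector v with ⟨v,v⟩ = ±1 and ⟨u,v⟩ = 0 such that, identifying V with V* via ⟨·,·⟩, C = (u ∧ v) ⊗ u; explicitly, C(X,Y,Z) = (⟨u,X⟩⟨v,Y⟩ − ⟨v,X⟩⟨u,Y⟩)⟨u,Z⟩ for all X,Y,Z ∈ V. -/

import Mathlib

open Module

section CottonAux

variable {V : Type*} [AddCommGroup V] [Module ℝ V] [FiniteDimensional ℝ V]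

lemma cotton_aux_trace
    (B : V →ₗ[ℝ] V →ₗ[ℝ] ℝ) (hBsymm : ∀ x y : V, B x y = B y x)
    (C : V →ₗ[ℝ] V →ₗ[ℝ] V →ₗ[ℝ] ℝ)
    (hCtrace : ∀ (Y : V) (T : V →ₗ[ℝ] V),
      (∀ X Z : V, B (T X) Z = C X Y Z) → LinearMap.trace ℝ V T = 0)
    (e : Basis (Fin 3) ℝ V) (M : Fin 3 → Fin 3 → ℝ)
    (hM : ∀ k j : Fin 3, (∑ i, M i j * B (e k) (e i)) = if k = j then (1:ℝ) else 0)
    (Y : V) : ∑ i, ∑ j, M i j * C (e i) Y (e j) = 0 := by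
  set T : V →ₗ[ℝ] V :=
    ∑ i, ∑ j, M i j • (((C.flip Y).flip (e j)).smulRight (e i)) with hTdef
  have hTapp : ∀ X : V, T X = ∑ i, ∑ j, (M i j * C X Y (e j)) • e i := by
    intro X
    simp [hTdef, LinearMap.sum_apply, LinearMap.smul_apply, LinearMap.smulRight_apply,
      LinearMap.flip_apply, mul_smul]
  have hT : ∀ X Z : V, B (T X) Z = C X Y Z := by
    intro X Z
    have key : B (T X) = C X Y := by
      refine e.ext fun k => ?_
      rw [hTapp]
      simp only [map_sum, map_smul, smul_eq_mul]
      have : ∀ j : Fin 3, ∑ i, M i j * C X Y (e j) * B (e i) (e k)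
          = (if k = j then (1:ℝ) else 0) * C X Y (e j) := by
        intro j
        rw [← hM k j, Finset.sum_mul]
        refine Finset.sum_congr rfl fun i _ => ?_
        rw [hBsymm (e k) (e i)]; ring
      rw [Finset.sum_comm]
      calc ∑ j, ∑ i, M i j * C X Y (e j) * B (e i) (e k)
          = ∑ j : Fin 3, (if k = j then (1:ℝ) else 0) * C X Y (e j) :=
            Finset.sum_congr rfl fun j _ => this j
        _ = C X Y (e k) := by simp
    rw [key]
  have htr := hCtrace Y T hT
  rw [LinearMap.trace_eq_matrix_trace ℝ e T, Matrix.trace] at htr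
  simp only [LinearMap.toMatrix_apply, Matrix.diag] at htr
  calc ∑ i, ∑ j, M i j * C (e i) Y (e j)
      = ∑ k, e.repr (T (e k)) k := by
        refine (Finset.sum_congr rfl fun k _ => ?_).symm
        rw [hTapp]
        simp [Finsupp.single_apply]
    _ = 0 := htr

lemma cotton_aux_zero (C : V →ₗ[ℝ] V →ₗ[ℝ] V →ₗ[ℝ] ℝ) (e : Basis (Fin 3) ℝ V)
    (h : ∀ i j k : Fin 3, C (e i) (e j) (e k) = 0) : C = 0 := by
  refine e.ext fun i => ?_
  rw [LinearMap.zero_apply]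
  refine e.ext fun j => ?_
  rw [LinearMap.zero_apply]
  refine e.ext fun k => ?_
  simpa using h i j k

lemma cotton_aux_repr (e : Basis (Fin 3) ℝ V) (X : V) :
    X = e.repr X 0 • e 0 + e.repr X 1 • e 1 + e.repr X 2 • e 2 := by
  have h := e.sum_repr X
  rw [Fin.sum_univ_three] at h
  exact h.symm

lemma cotton_null
    (hdim : Module.finrank ℝ V = 3)
    (B : V →ₗ[ℝ] V →ₗ[ℝ] ℝ)
    (hBsymm : ∀ x y : V, B x y = B y x)
    (hBnondeg : ∀ x : V, (∀ y : V, B x y = 0) → x = 0)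
    (C : V →ₗ[ℝ] V →ₗ[ℝ] V →ₗ[ℝ] ℝ)
    (hCne : C ≠ 0)
    (hCtrace : ∀ (Y : V) (T : V →ₗ[ℝ] V),
      (∀ X Z : V, B (T X) Z = C X Y Z) → LinearMap.trace ℝ V T = 0)
    (hCanti : ∀ X Y Z : V, C X Y Z = - C Y X Z)
    (u₀ : V)
    (hker1 : ∀ Y Z : V, C u₀ Y Z = 0)
    (hker2 : ∀ X Z : V, C X u₀ Z = 0)
    (hker3 : ∀ X Y : V, C X Y u₀ = 0)
    (hself : ∀ X Z : V, C X X Z = 0) :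
    B u₀ u₀ = 0 := by
  by_contra hκ
  -- the kernel of B u₀ has dimension 2
  have hrange : LinearMap.range (B u₀) = ⊤ := by
    rw [LinearMap.range_eq_top]
    intro r
    refine ⟨(r / B u₀ u₀) • u₀, ?_⟩
    simp only [map_smul, smul_eq_mul]
    field_simp
  have hkerdim : finrank ℝ (LinearMap.ker (B u₀)) = 2 := by
    have h := LinearMap.finrank_range_add_finrank_ker (B u₀)
    rw [hrange, finrank_top, finrank_self, hdim] at h
    omega
  let bk := Module.finBasisOfFinrankEq ℝ (LinearMap.ker (B u₀)) hkerdim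
  set k0 : V := (bk 0 : V) with hk0def
  set k1 : V := (bk 1 : V) with hk1def
  have hmem : ∀ i : Fin 2, B u₀ ((bk i : V)) = 0 := fun i => (bk i).2
  have hk00 : B u₀ k0 = 0 := hmem 0
  have hk01 : B u₀ k1 = 0 := hmem 1
  have hbkli : LinearIndependent ℝ (fun i : Fin 2 => ((bk i : V))) :=
    bk.linearIndependent.map' (Submodule.subtype _) (Submodule.ker_subtype _)
  have hpairind : ∀ a b : ℝ, a • k0 + b • k1 = 0 → a = 0 ∧ b = 0 := by
    intro a b hab
    have := Fintype.linearIndependent_iff.mp hbkli ![a, b] (by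
      rw [Fin.sum_univ_two]; simpa using hab)
    exact ⟨by simpa using this 0, by simpa using this 1⟩
  have hli : LinearIndependent ℝ ![u₀, k0, k1] := by
    rw [Fintype.linearIndependent_iff]
    intro g hg
    rw [Fin.sum_univ_three] at hg
    simp only [Matrix.cons_val_zero, Matrix.cons_val_one, Matrix.head_cons,
      Matrix.cons_val_two, Matrix.tail_cons] at hg
    have h0 : g 0 = 0 := by
      have h := congrArg (B u₀) hg
      simp only [map_add, map_smul, hk00, hk01, smul_eq_mul, map_zero,
        mul_zero, add_zero] at h
      exact (mul_eq_zero.mp h).resolve_right hκ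
    rw [h0, zero_smul, zero_add] at hg
    obtain ⟨h1, h2⟩ := hpairind _ _ hg
    intro i; fin_cases i <;> simp [h0, h1, h2]
  have hcard : Fintype.card (Fin 3) = finrank ℝ V := by simp [hdim]
  let e := basisOfLinearIndependentOfCardEqFinrank hli hcard
  have hecoe : ∀ i, e i = ![u₀, k0, k1] i := fun i => by
    rw [coe_basisOfLinearIndependentOfCardEqFinrank]
  have he0 : e 0 = u₀ := by rw [hecoe]; rfl
  have he1 : e 1 = k0 := by rw [hecoe]; rfl
  have he2 : e 2 = k1 := by rw [hecoe]; rfl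
  obtain ⟨α, hα⟩ : ∃ a, B k0 k0 = a := ⟨_, rfl⟩
  obtain ⟨β, hβ⟩ : ∃ a, B k0 k1 = a := ⟨_, rfl⟩
  obtain ⟨γ, hγ⟩ : ∃ a, B k1 k1 = a := ⟨_, rfl⟩
  have hβ' : B k1 k0 = β := by rw [hBsymm, hβ]
  have hk00' : B k0 u₀ = 0 := by rw [hBsymm, hk00]
  have hk01' : B k1 u₀ = 0 := by rw [hBsymm, hk01]
  have hΔ : α * γ - β * β ≠ 0 := by
    intro hΔ0
    by_cases hc : β = 0 ∧ γ = 0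
    · refine hbkli.ne_zero 1 (hBnondeg _ fun y => ?_)
      show B k1 y = 0
      rw [cotton_aux_repr e y]
      simp [map_add, map_smul, he0, he1, he2, hk01', hβ', hγ, hc.1, hc.2]
    · have hzne : γ • k0 - β • k1 ≠ 0 := by
        intro h
        obtain ⟨hh1, hh2⟩ := hpairind γ (-β) (by
          rw [neg_smul, ← sub_eq_add_neg]; exact h)
        exact hc ⟨by linarith [neg_eq_zero.mp hh2], hh1⟩
      refine hzne (hBnondeg _ fun y => ?_)
      rw [cotton_aux_repr e y]
      simp only [map_add, map_smul, map_sub, LinearMap.sub_apply, LinearMap.smul_apply,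
        smul_eq_mul, he0, he1, he2, hk00', hk01', hα, hβ, hβ', hγ]
      linear_combination (e.repr y) 1 * hΔ0
  set Δ : ℝ := α * γ - β * β with hΔdef
  set M : Fin 3 → Fin 3 → ℝ :=
    ![![(B u₀ u₀)⁻¹, 0, 0], ![0, γ/Δ, -(β/Δ)], ![0, -(β/Δ), α/Δ]] with hMdef
  have hM : ∀ a b : Fin 3, (∑ i, M i b * B (e a) (e i)) = if a = b then (1:ℝ) else 0 := by
    intro a b
    fin_cases a <;> fin_cases b <;>
      simp only [hMdef, Fin.sum_univ_three, he0, he1, he2, hk00, hk01, hk00', hk01',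
        hα, hβ, hβ', hγ, Matrix.cons_val_zero, Matrix.cons_val_one, Matrix.head_cons,
        Matrix.cons_val_two, Matrix.tail_cons, Fin.isValue, mul_zero, zero_mul,
        add_zero, zero_add, if_true, if_false, Fin.mk_one, Fin.zero_eta, Fin.reduceEq,
        Fin.reduceFinMk, reduceIte] <;>
      field_simp <;> ring
  have hflip : ∀ Z, C k1 k0 Z = - C k0 k1 Z := fun Z => hCanti k1 k0 Z
  obtain ⟨p, hp⟩ : ∃ a, C k0 k1 k0 = a := ⟨_, rfl⟩
  obtain ⟨q, hq⟩ : ∃ a, C k0 k1 k1 = a := ⟨_, rfl⟩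
  have ht2 := cotton_aux_trace B hBsymm C hCtrace e M hM k0
  have ht3 := cotton_aux_trace B hBsymm C hCtrace e M hM k1
  rw [Fin.sum_univ_three] at ht2 ht3
  simp only [Fin.sum_univ_three, hMdef, he0, he1, he2, hker1, hker2, hker3, hself,
    hflip, hp, hq, Matrix.cons_val_zero, Matrix.cons_val_one, Matrix.head_cons,
    Matrix.cons_val_two, Matrix.tail_cons, mul_zero, zero_mul, add_zero, zero_add,
    mul_neg, neg_neg, neg_zero] at ht2 ht3
  have h1 : β * p = α * q := by field_simp at ht2; linarith
  have h2 : γ * p = β * q := by field_simp at ht3; linarith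
  have hp0 : p = 0 := by
    have hΔp : Δ * p = 0 := by rw [hΔdef]; linear_combination α * h2 - β * h1
    exact (mul_eq_zero.mp hΔp).resolve_left hΔ
  have hq0 : q = 0 := by
    have hΔq : Δ * q = 0 := by rw [hΔdef]; linear_combination β * h2 - γ * h1
    exact (mul_eq_zero.mp hΔq).resolve_left hΔ
  refine hCne (cotton_aux_zero C e fun i j k => ?_)
  fin_cases i <;> fin_cases j <;> fin_cases k <;>
    simp [he0, he1, he2, hker1, hker2, hker3, hself, hflip, hp, hq, hp0, hq0]


end CottonAux

set_option maxHeartbeats 1000000 in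
/-- A nonzero Cotton-like tensor on a 3-dimensional pseudo-Euclidean space whose
kernel is 1-dimensional has the form `(u ∧ v) ⊗ u` with `u` a nonzero kernel
vector and `v` unit and orthogonal to `u`. -/
theorem stmt1 {V : Type*} [AddCommGroup V] [Module ℝ V] [FiniteDimensional ℝ V]
    (hdim : Module.finrank ℝ V = 3)
    (B : V →ₗ[ℝ] V →ₗ[ℝ] ℝ)
    (hBsymm : ∀ x y : V, B x y = B y x)
    (hBnondeg : ∀ x : V, (∀ y : V, B x y = 0) → x = 0)
    (C : V →ₗ[ℝ] V →ₗ[ℝ] V →ₗ[ℝ] ℝ)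
    (hCne : C ≠ 0)
    (hCanti : ∀ X Y Z : V, C X Y Z = - C Y X Z)
    (hCcyc : ∀ X Y Z : V, C X Y Z + C Y Z X + C Z X Y = 0)
    (hCtrace : ∀ (Y : V) (T : V →ₗ[ℝ] V),
      (∀ X Z : V, B (T X) Z = C X Y Z) → LinearMap.trace ℝ V T = 0)
    -- the kernel D = {u : C(u,·,·) = 0} is one-dimensional:
    (hD : ∃ u₀ : V, u₀ ≠ 0 ∧ (∀ Y Z : V, C u₀ Y Z = 0) ∧
      ∀ w : V, (∀ Y Z : V, C w Y Z = 0) → ∃ c : ℝ, w = c • u₀) :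
    ∃ u v : V, u ≠ 0 ∧ (∀ Y Z : V, C u Y Z = 0) ∧
      (B v v = 1 ∨ B v v = -1) ∧ B u v = 0 ∧
      ∀ X Y Z : V, C X Y Z = (B u X * B v Y - B v X * B u Y) * B u Z := by
  classical
  obtain ⟨u₀, hu0, hker1, -⟩ := hD
  have hker2 : ∀ X Z : V, C X u₀ Z = 0 := fun X Z => by rw [hCanti, hker1, neg_zero]
  have hker3 : ∀ X Y : V, C X Y u₀ = 0 := fun X Y => by
    have h := hCcyc X Y u₀
    rw [hker1, hker2] at h
    linarith
  have hself : ∀ X Z : V, C X X Z = 0 := fun X Z => by have := hCanti X X Z; linarith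
  have hnull : B u₀ u₀ = 0 :=
    cotton_null hdim B hBsymm hBnondeg C hCne hCtrace hCanti u₀ hker1 hker2 hker3 hself
  -- construct w with B u₀ w = 1, B w w = 0
  obtain ⟨w₀, hw₀⟩ : ∃ w : V, B u₀ w ≠ 0 := by
    by_contra h; push_neg at h; exact hu0 (hBnondeg u₀ h)
  set w₁ := (B u₀ w₀)⁻¹ • w₀ with hw1def
  have hw1 : B u₀ w₁ = 1 := by
    simp only [hw1def, map_smul, smul_eq_mul]
    field_simp
  set w := w₁ - (B w₁ w₁ / 2) • u₀ with hwdef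
  have huw : B u₀ w = 1 := by
    simp only [hwdef, map_sub, map_smul, smul_eq_mul, hw1, hnull]
    ring
  have hww : B w w = 0 := by
    have hs := hBsymm w₁ u₀
    simp only [hwdef, map_sub, map_smul, LinearMap.sub_apply, LinearMap.smul_apply,
      smul_eq_mul, hw1, hnull, hs]
    ring
  -- find v₀ orthogonal to u₀ and w
  set f2 := LinearMap.prod (B u₀) (B w) with hf2def
  have hker2dim : 1 ≤ finrank ℝ (LinearMap.ker f2) := by
    have h := LinearMap.finrank_range_add_finrank_ker f2
    have h2 : finrank ℝ (LinearMap.range f2) ≤ 2 := by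
      have h3 := Submodule.finrank_le (LinearMap.range f2)
      have h4 : finrank ℝ (ℝ × ℝ) = 2 := by
        simp [Module.finrank_prod]
      omega
    rw [hdim] at h
    omega
  have hbot : LinearMap.ker f2 ≠ ⊥ := by
    intro h; rw [h, finrank_bot] at hker2dim; omega
  obtain ⟨v₀, hv₀mem, hv₀ne⟩ := Submodule.exists_mem_ne_zero_of_ne_bot hbot
  have hv₀' : B u₀ v₀ = 0 ∧ B w v₀ = 0 := by
    have h := LinearMap.mem_ker.mp hv₀mem
    rw [hf2def] at h
    simpa [LinearMap.prod_apply, Prod.ext_iff] using h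
  obtain ⟨huv₀, hwv₀⟩ := hv₀'
  -- independence helper
  have hind : ∀ v' : V, v' ≠ 0 → B u₀ v' = 0 → B w v' = 0 →
      LinearIndependent ℝ ![u₀, v', w] := by
    intro v' hv' h1 h2
    rw [Fintype.linearIndependent_iff]
    intro g hg
    rw [Fin.sum_univ_three] at hg
    simp only [Matrix.cons_val_zero, Matrix.cons_val_one, Matrix.head_cons,
      Matrix.cons_val_two, Matrix.tail_cons] at hg
    have e2 : g 2 = 0 := by
      have h := congrArg (B u₀) hg
      simpa [map_add, map_smul, hnull, h1, huw] using h
    have e0 : g 0 = 0 := by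
      have h := congrArg (B w) hg
      simpa [map_add, map_smul, hBsymm w u₀, huw, h2, hww] using h
    have e1 : g 1 = 0 := by
      rw [e0, e2, zero_smul, zero_smul, zero_add, add_zero] at hg
      exact (smul_eq_zero.mp hg).resolve_right hv'
    intro i; fin_cases i
    · exact e0
    · exact e1
    · exact e2
  have hcard : Fintype.card (Fin 3) = finrank ℝ V := by simp [hdim]
  -- B v₀ v₀ ≠ 0
  have hvv₀ : B v₀ v₀ ≠ 0 := by
    intro h0
    apply hv₀ne
    apply hBnondeg
    intro y
    let e₀ := basisOfLinearIndependentOfCardEqFinrank (hind v₀ hv₀ne huv₀ hwv₀) hcard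
    have hecoe : ∀ i, e₀ i = ![u₀, v₀, w] i := fun i => by
      rw [coe_basisOfLinearIndependentOfCardEqFinrank]
    have he0 : e₀ 0 = u₀ := by rw [hecoe]; rfl
    have he1 : e₀ 1 = v₀ := by rw [hecoe]; rfl
    have he2 : e₀ 2 = w := by rw [hecoe]; rfl
    rw [cotton_aux_repr e₀ y]
    simp [map_add, map_smul, he0, he1, he2, hBsymm v₀ u₀, huv₀, h0, hBsymm v₀ w, hwv₀]
  -- normalize v
  set r := Real.sqrt |B v₀ v₀| with hrdef
  have hr : 0 < r := Real.sqrt_pos.mpr (abs_pos.mpr hvv₀)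
  set v := r⁻¹ • v₀ with hvdef
  have hrr : r * r = |B v₀ v₀| := Real.mul_self_sqrt (abs_nonneg _)
  have hveq : B v v = B v₀ v₀ / |B v₀ v₀| := by
    simp only [hvdef, map_smul, LinearMap.smul_apply, smul_eq_mul]
    rw [← hrr]
    field_simp
  have hσ : B v v = 1 ∨ B v v = -1 := by
    rcases abs_cases (B v₀ v₀) with ⟨h1, _⟩ | ⟨h1, _⟩
    · left; rw [hveq, h1]; field_simp
    · right; rw [hveq, h1]; field_simp
  obtain ⟨σ, hσdef⟩ : ∃ a, B v v = a := ⟨_, rfl⟩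
  rw [hσdef] at hσ
  have hσsq : σ * σ = 1 := by rcases hσ with h | h <;> rw [h] <;> norm_num
  have hσne : σ ≠ 0 := by rcases hσ with h | h <;> rw [h] <;> norm_num
  have hvne : v ≠ 0 := by
    rw [hvdef]; exact smul_ne_zero (inv_ne_zero hr.ne') hv₀ne
  have huv : B u₀ v = 0 := by
    rw [hvdef]; simp [map_smul, huv₀]
  have hwv : B w v = 0 := by
    rw [hvdef]; simp [map_smul, hwv₀]
  have hvu : B v u₀ = 0 := by rw [hBsymm]; exact huv
  have hvw : B v w = 0 := by rw [hBsymm]; exact hwv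
  have hwu : B w u₀ = 1 := by rw [hBsymm]; exact huw
  -- adapted basis
  let e := basisOfLinearIndependentOfCardEqFinrank (hind v hvne huv hwv) hcard
  have hecoe : ∀ i, e i = ![u₀, v, w] i := fun i => by
    rw [coe_basisOfLinearIndependentOfCardEqFinrank]
  have he0 : e 0 = u₀ := by rw [hecoe]; rfl
  have he1 : e 1 = v := by rw [hecoe]; rfl
  have he2 : e 2 = w := by rw [hecoe]; rfl
  set M : Fin 3 → Fin 3 → ℝ := ![![0, 0, 1], ![0, σ, 0], ![1, 0, 0]] with hMdef
  have hM : ∀ a b : Fin 3, (∑ i, M i b * B (e a) (e i)) = if a = b then (1:ℝ) else 0 := by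
    intro a b
    fin_cases a <;> fin_cases b <;>
      simp only [hMdef, Fin.sum_univ_three, he0, he1, he2, hnull, huv, huw, hvu, hσdef,
        hvw, hwu, hwv, hww, Matrix.cons_val_zero, Matrix.cons_val_one, Matrix.head_cons,
        Matrix.cons_val_two, Matrix.tail_cons, Fin.isValue, mul_zero, zero_mul,
        add_zero, zero_add, mul_one, one_mul, Fin.mk_one, Fin.zero_eta, Fin.reduceEq,
        Fin.reduceFinMk, reduceIte, hσsq] <;>
      norm_num
  have hflip : ∀ Z, C w v Z = - C v w Z := fun Z => hCanti w v Z
  obtain ⟨bb, hbdef⟩ : ∃ a, C v w v = a := ⟨_, rfl⟩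
  obtain ⟨cc, hcdef⟩ : ∃ a, C v w w = a := ⟨_, rfl⟩
  have htr := cotton_aux_trace B hBsymm C hCtrace e M hM w
  simp only [Fin.sum_univ_three, hMdef, he0, he1, he2, hker1, hker2, hker3, hself,
    hflip, hbdef, hcdef, Matrix.cons_val_zero, Matrix.cons_val_one, Matrix.head_cons,
    Matrix.cons_val_two, Matrix.tail_cons, mul_zero, zero_mul, add_zero, zero_add,
    mul_neg, neg_neg, neg_zero, one_mul, mul_one] at htr
  have hb0 : bb = 0 := by
    rcases mul_eq_zero.mp htr with h | h
    · exact absurd h hσne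
    · exact h
  have hc0 : cc ≠ 0 := by
    intro h
    refine hCne (cotton_aux_zero C e fun i j k => ?_)
    fin_cases i <;> fin_cases j <;> fin_cases k <;>
      simp [he0, he1, he2, hker1, hker2, hker3, hself, hflip, hbdef, hcdef, hb0, h]
  -- cube root
  set s := -σ * cc with hsdef
  have hs : s ≠ 0 := mul_ne_zero (neg_ne_zero.mpr hσne) hc0
  set t := Real.sqrt |s| with htdef
  have htpos : 0 < t := Real.sqrt_pos.mpr (abs_pos.mpr hs)
  have ht3 : t ^ (2:ℕ) = |s| := by
    rw [htdef]
    exact Real.sq_sqrt (abs_nonneg s)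
  set ε := if 0 < s then (1:ℝ) else -1 with hεdef
  have hε2 : ε * ε = 1 := by rw [hεdef]; split_ifs <;> norm_num
  have hεs : ε * |s| = s := by
    rw [hεdef]; split_ifs with h
    · rw [abs_of_pos h]; ring
    · rw [abs_of_nonpos (le_of_not_gt h)]; ring
  have hcval : C v w w = -σ * (ε * t ^ (2:ℕ)) := by
    rw [hcdef, ht3]
    have h1 : -σ * (ε * |s|) = -σ * s := by rw [hεs]
    rw [h1, hsdef]
    linear_combination (-cc) * hσsq
  have hCvwv : C v w v = 0 := by rw [hbdef, hb0]
  refine ⟨t • u₀, ε • v, smul_ne_zero htpos.ne' hu0, ?_, ?_, ?_, ?_⟩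
  · intro Y Z; simp [map_smul, hker1]
  · have h : B (ε • v) (ε • v) = σ := by
      simp only [map_smul, LinearMap.smul_apply, smul_eq_mul, hσdef]
      linear_combination σ * hε2
    rw [h]; exact hσ
  · simp [map_smul, huv]
  · intro X Y Z
    have hX := cotton_aux_repr e X
    have hY := cotton_aux_repr e Y
    have hZ := cotton_aux_repr e Z
    rw [he0, he1, he2] at hX hY hZ
    rw [hX, hY, hZ]
    simp only [map_add, map_smul, LinearMap.add_apply, LinearMap.smul_apply, smul_eq_mul,
      hker1, hker2, hker3, hself, hflip, hCvwv, hcval, hnull, huv, huw, hvu, hσdef,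
      hvw, hwu, hwv, hww]
    ring
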